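/- Fix any n > 2 and an n-point dataset X = {x_1,…,x_n} ⊂ ℝ^{n−1}. There exists a well-defined continuous function g : [0,1] → (ℝ^{n−1})ⁿ such that for every C ∈ [0,1], the dataset g(C) satisfies ‖g(C)_i − g(C)_j‖² = (1−C)·‖x_i − x_j‖² + C for all i ≠ j, and for every perplexity ρ ∈ (1, n−1) and every C ∈ [0,1), TSNE_ρ(X) = TSNE_ρ(g(C)). -/

import Mathlib

open scoped BigOperators RealInnerProductSpace
noncomputable section

namespace TSNEPaper

variable {n k : ℕ} {E F : Type*}

/-- The set of nearest neighbors of point `i` (used for the `σ = 0` limit of the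
conditional affinity). -/
def nearestSet [NormedAddCommGroup E] (X : Fin n → E) (i : Fin n) : Finset (Fin n) :=
  (Finset.univ.erase i).filter fun j => ∀ l ∈ Finset.univ.erase i, ‖X i - X j‖ ≤ ‖X i - X l‖

/-- Conditional t-SNE affinity `P_{j|i}(X; σ)`.  For `σ = 0` we take the limiting value
as `σ → 0⁺`, which puts equal mass on the nearest neighbors of `i`. -/
def condAffinity [NormedAddCommGroup E] (X : Fin n → E) (σ : ℝ) (i j : Fin n) : ℝ :=
  if j = i then 0
  else if σ = 0 then (if j ∈ nearestSet X i then ((nearestSet X i).card : ℝ)⁻¹ else 0)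
  else Real.exp (-‖X i - X j‖ ^ 2 / (2 * σ ^ 2)) /
      ∑ l ∈ Finset.univ.erase i, Real.exp (-‖X i - X l‖ ^ 2 / (2 * σ ^ 2))

/-- Base-2 Shannon entropy of a distribution on `Fin n`. -/
def entropy2 (p : Fin n → ℝ) : ℝ := -∑ j, p j * Real.logb 2 (p j)

/-- `σ` is a perplexity-`ρ`-calibrated bandwidth for point `i`: it is nonnegative and
minimizes the gap between the entropy of `P_{·|i}(X;σ)` and `log₂ ρ`. -/
def IsCalibrated [NormedAddCommGroup E] (X : Fin n → E) (ρ : ℝ) (i : Fin n) (σ : ℝ) : Prop :=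
  0 ≤ σ ∧ ∀ σ' : ℝ, 0 ≤ σ' →
    |entropy2 (condAffinity X σ i) - Real.logb 2 ρ| ≤
      |entropy2 (condAffinity X σ' i) - Real.logb 2 ρ|

/-- The calibrated bandwidth `σ_i^*` (well defined by uniqueness of the minimizer). -/
def sigmaStar [NormedAddCommGroup E] (X : Fin n → E) (ρ : ℝ) (i : Fin n) : ℝ :=
  Classical.epsilon (IsCalibrated X ρ i)

/-- Symmetrized input affinity `P_{ij}(X)`. -/
def inAffinity [NormedAddCommGroup E] (X : Fin n → E) (ρ : ℝ) (i j : Fin n) : ℝ :=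
  if i = j then 0
  else (condAffinity X (sigmaStar X ρ j) j i + condAffinity X (sigmaStar X ρ i) i j) / (2 * n)

/-- Output affinity `Q_{ij}(Y)`. -/
def outAffinity [NormedAddCommGroup F] (Y : Fin n → F) (i j : Fin n) : ℝ :=
  if i = j then 0
  else (1 + ‖Y i - Y j‖ ^ 2)⁻¹ /
    ∑ p ∈ Finset.univ.offDiag, (1 + ‖Y p.1 - Y p.2‖ ^ 2)⁻¹

/-- The t-SNE loss `L_X(Y) = KL(P(X) ‖ Q(Y))`. -/
def tsneLoss {d : ℕ} [NormedAddCommGroup E] (X : Fin n → E) (ρ : ℝ)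
    (Y : Fin n → EuclideanSpace ℝ (Fin d)) : ℝ :=
  ∑ p ∈ Finset.univ.offDiag,
    inAffinity X ρ p.1 p.2 * Real.log (inAffinity X ρ p.1 p.2 / outAffinity Y p.1 p.2)

/-- The set of stationary t-SNE outputs in `ℝ^d` for input `X` and perplexity `ρ`. -/
def TSNE [NormedAddCommGroup E] (d : ℕ) (ρ : ℝ) (X : Fin n → E) :
    Set (Fin n → EuclideanSpace ℝ (Fin d)) :=
  {Y : Fin n → EuclideanSpace ℝ (Fin d) | fderiv ℝ (tsneLoss X ρ) Y = 0}

/-- The image of t-SNE: all stationary outputs over all `n`-point inputs in `ℝ^{n-1}`. -/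
def IMTSNE (n d : ℕ) (ρ : ℝ) : Set (Fin n → EuclideanSpace ℝ (Fin d)) :=
  ⋃ X : Fin n → EuclideanSpace ℝ (Fin (n - 1)), TSNE d ρ X

/-- The `m`-th cluster of the partition of `[n]` encoded by the labelling `ℓ`. -/
def cluster (ℓ : Fin n → Fin k) (m : Fin k) : Finset (Fin n) :=
  Finset.univ.filter fun i => ℓ i = m

/-- Average within-cluster distance `a(i)`. -/
def aScore [NormedAddCommGroup E] (X : Fin n → E) (ℓ : Fin n → Fin k) (i : Fin n) : ℝ :=
  (∑ j ∈ cluster ℓ (ℓ i), ‖X i - X j‖) / (((cluster ℓ (ℓ i)).card : ℝ) - 1)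

/-- Closest average across-cluster distance `b(i)`. -/
def bScore [NormedAddCommGroup E] (X : Fin n → E) (ℓ : Fin n → Fin k) (i : Fin n) : ℝ :=
  sInf {r : ℝ | ∃ m : Fin k, m ≠ ℓ i ∧
    r = (∑ j ∈ cluster ℓ m, ‖X i - X j‖) / ((cluster ℓ m).card : ℝ)}

/-- Silhouette score of point `i`. -/
def silhouette [NormedAddCommGroup E] (X : Fin n → E) (ℓ : Fin n → Fin k) (i : Fin n) : ℝ :=
  if (cluster ℓ (ℓ i)).card = 1 then 0
  else (bScore X ℓ i - aScore X ℓ i) / max (aScore X ℓ i) (bScore X ℓ i)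

/-- Average silhouette score `S̄(X; C₁,…,C_k)`. -/
def avgSilhouette [NormedAddCommGroup E] (X : Fin n → E) (ℓ : Fin n → Fin k) : ℝ :=
  (∑ i, silhouette X ℓ i) / (n : ℝ)

/-- Centroid `E(S)` of the points indexed by `S`. -/
def centroid [NormedAddCommGroup E] [NormedSpace ℝ E] (X : Fin n → E)
    (S : Finset (Fin n)) : E :=
  ((S.card : ℝ))⁻¹ • ∑ i ∈ S, X i

/-- Numerator (between-cluster term) of the Calinski–Harabasz index. -/
def chNum [NormedAddCommGroup E] [NormedSpace ℝ E] (X : Fin n → E) (ℓ : Fin n → Fin k) : ℝ :=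
  ((k : ℝ) - 1)⁻¹ *
    ∑ m : Fin k, ((cluster ℓ m).card : ℝ) *
      ‖centroid X (cluster ℓ m) - centroid X Finset.univ‖ ^ 2

/-- Denominator (within-cluster term) of the Calinski–Harabasz index. -/
def chDen [NormedAddCommGroup E] [NormedSpace ℝ E] (X : Fin n → E) (ℓ : Fin n → Fin k) : ℝ :=
  ((n : ℝ) - (k : ℝ))⁻¹ *
    ∑ m : Fin k, ∑ i ∈ cluster ℓ m, ‖X i - centroid X (cluster ℓ m)‖ ^ 2

/-- Calinski–Harabasz index, valued in `[0,∞]`, with the conventions `CH = 1` when both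
numerator and denominator vanish and `CH = ∞` when only the denominator vanishes. -/
def CHindex [NormedAddCommGroup E] [NormedSpace ℝ E] (X : Fin n → E) (ℓ : Fin n → Fin k) :
    EReal :=
  if chDen X ℓ = 0 then (if chNum X ℓ = 0 then 1 else ⊤)
  else ((chNum X ℓ / chDen X ℓ : ℝ) : EReal)

/-- Minimum between-cluster distance (numerator of the Dunn index). -/
def diNum [NormedAddCommGroup E] (X : Fin n → E) (ℓ : Fin n → Fin k) : ℝ :=
  sInf {r : ℝ | ∃ i j : Fin n, ℓ i ≠ ℓ j ∧ r = ‖X i - X j‖}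

/-- Maximum within-cluster distance (denominator of the Dunn index). -/
def diDen [NormedAddCommGroup E] (X : Fin n → E) (ℓ : Fin n → Fin k) : ℝ :=
  sSup {r : ℝ | ∃ i j : Fin n, ℓ i = ℓ j ∧ r = ‖X i - X j‖}

/-- Dunn index, valued in `[0,∞]`, with the conventions `DI = 1` when both numerator and
denominator vanish and `DI = ∞` when only the denominator vanishes. -/
def DIindex [NormedAddCommGroup E] (X : Fin n → E) (ℓ : Fin n → Fin k) : EReal :=
  if diDen X ℓ = 0 then (if diNum X ℓ = 0 then 1 else ⊤)
  else ((diNum X ℓ / diDen X ℓ : ℝ) : EReal)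

/-- `Y` is an `(α, Y i₀)`-outlier configuration: there is a hyperplane (with unit normal `v`)
separating `Y i₀` from the remaining points with margin width at least
`α · max{1, diam(Y ∖ {Y i₀})}`. -/
def IsOutlierConfig [NormedAddCommGroup F] [InnerProductSpace ℝ F] (Y : Fin n → F)
    (i0 : Fin n) (α : ℝ) : Prop :=
  0 < α ∧ ∃ v : F, ‖v‖ = 1 ∧ ∀ i : Fin n, i ≠ i0 →
    α * max 1 (Metric.diam (Y '' {i : Fin n | i ≠ i0})) ≤ ⟪Y i - Y i0, v⟫

/-- The outlier number `α(Y, y₀)`: the largest `α` for which `Y` is an `(α, Y i₀)`-outlier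
configuration (`0` if there is none). -/
def outlierNumber [NormedAddCommGroup F] [InnerProductSpace ℝ F] (Y : Fin n → F)
    (i0 : Fin n) : ℝ :=
  sSup {α : ℝ | IsOutlierConfig Y i0 α}


section AUX
open Real Filter Finset


variable {n : ℕ}

/-- auxiliary: partition function -/
def Zf (En : Fin n → ℝ) (J : Finset (Fin n)) (t : ℝ) : ℝ := ∑ j ∈ J, Real.exp (-(En j) * t)
def Af (En : Fin n → ℝ) (J : Finset (Fin n)) (t : ℝ) : ℝ :=
  ∑ j ∈ J, En j * Real.exp (-(En j) * t)
def Ff (En : Fin n → ℝ) (J : Finset (Fin n)) (t : ℝ) : ℝ :=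
  ∑ j ∈ J, (En j) ^ 2 * Real.exp (-(En j) * t)
def qf (En : Fin n → ℝ) (J : Finset (Fin n)) (t : ℝ) (j : Fin n) : ℝ :=
  Real.exp (-(En j) * t) / Zf En J t
def hfn (En : Fin n → ℝ) (J : Finset (Fin n)) (t : ℝ) : ℝ :=
  ∑ j ∈ J, Real.negMulLog (qf En J t j)

variable {En : Fin n → ℝ} {J : Finset (Fin n)}

lemma Zf_pos (hJ : J.Nonempty) (t : ℝ) : 0 < Zf En J t :=
  Finset.sum_pos (fun j _ => Real.exp_pos _) hJ

lemma hfn_eq (hJ : J.Nonempty) (t : ℝ) :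
    hfn En J t = t * (Af En J t / Zf En J t) + Real.log (Zf En J t) := by
  have hZ := Zf_pos (En := En) hJ t
  have hZ' : Zf En J t ≠ 0 := hZ.ne'
  have hterm : ∀ j ∈ J, Real.negMulLog (qf En J t j) =
      t * (En j * Real.exp (-(En j) * t)) / Zf En J t +
        Real.log (Zf En J t) * (Real.exp (-(En j) * t) / Zf En J t) := by
    intro j _
    rw [Real.negMulLog, qf, Real.log_div (Real.exp_ne_zero _) hZ', Real.log_exp]
    field_simp
    ring
  rw [hfn, Finset.sum_congr rfl hterm, Finset.sum_add_distrib]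
  rw [← Finset.sum_div, ← Finset.mul_sum, ← Finset.mul_sum, ← Finset.sum_div]
  rw [show (∑ i ∈ J, En i * Real.exp (-(En i) * t)) = Af En J t from rfl,
    show (∑ i ∈ J, Real.exp (-(En i) * t)) = Zf En J t from rfl,
    div_self hZ', mul_one, mul_div_assoc]

lemma Zf_hasDeriv (t : ℝ) : HasDerivAt (Zf En J) (-Af En J t) t := by
  have : HasDerivAt (Zf En J) (∑ j ∈ J, Real.exp (-(En j) * t) * (-(En j))) t := by
    apply HasDerivAt.fun_sum
    intro j _
    simpa using ((hasDerivAt_id t).const_mul (-(En j))).exp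
  convert this using 1
  rw [Af, ← Finset.sum_neg_distrib]
  exact Finset.sum_congr rfl fun j _ => by ring

lemma Af_hasDeriv (t : ℝ) : HasDerivAt (Af En J) (-Ff En J t) t := by
  have : HasDerivAt (Af En J) (∑ j ∈ J, En j * (Real.exp (-(En j) * t) * (-(En j)))) t := by
    apply HasDerivAt.fun_sum
    intro j _
    simpa using (((hasDerivAt_id t).const_mul (-(En j))).exp).const_mul (En j)
  convert this using 1
  rw [Ff, ← Finset.sum_neg_distrib]
  exact Finset.sum_congr rfl fun j _ => by ring

lemma hfn_hasDeriv (hJ : J.Nonempty) (t : ℝ) :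
    HasDerivAt (hfn En J)
      (t * ((Af En J t) ^ 2 - Ff En J t * Zf En J t) / (Zf En J t) ^ 2) t := by
  have hZ := Zf_pos (En := En) hJ t
  have hZ' : Zf En J t ≠ 0 := hZ.ne'
  have h1 : HasDerivAt (fun s => Af En J s / Zf En J s)
      ((-Ff En J t * Zf En J t - Af En J t * (-Af En J t)) / (Zf En J t) ^ 2) t :=
    (Af_hasDeriv t).div (Zf_hasDeriv t) hZ'
  have h2 : HasDerivAt (fun s => s * (Af En J s / Zf En J s))
      (1 * (Af En J t / Zf En J t) +
        t * ((-Ff En J t * Zf En J t - Af En J t * (-Af En J t)) / (Zf En J t) ^ 2)) t :=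
    (hasDerivAt_id t).mul h1
  have h3 : HasDerivAt (fun s => Real.log (Zf En J s)) (-Af En J t / Zf En J t) t :=
    (Zf_hasDeriv t).log hZ'
  have h4 := h2.add h3
  have : (fun s => s * (Af En J s / Zf En J s) + Real.log (Zf En J s)) = hfn En J := by
    funext s; rw [hfn_eq hJ]
  change HasDerivAt (fun s => s * (Af En J s / Zf En J s) + Real.log (Zf En J s)) _ t at h4
  rw [this] at h4
  convert h4 using 1
  field_simp
  ring

lemma var_pos (t : ℝ) {j₀ j₁ : Fin n} (h₀ : j₀ ∈ J) (h₁ : j₁ ∈ J) (hne : En j₀ ≠ En j₁) :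
    (Af En J t) ^ 2 < Ff En J t * Zf En J t := by
  set w : Fin n → ℝ := fun j => Real.exp (-(En j) * t) with hw
  have hwpos : ∀ j, 0 < w j := fun j => Real.exp_pos _
  have key : ∑ j ∈ J, ∑ l ∈ J, w j * w l * (En j - En l) ^ 2 =
      2 * (Ff En J t * Zf En J t - (Af En J t) ^ 2) := by
    have inner : ∀ j ∈ J, ∑ l ∈ J, w j * w l * (En j - En l) ^ 2 =
        (w j * (En j) ^ 2) * Zf En J t + w j * Ff En J t -
          (2 * (w j * En j)) * Af En J t := by
      intro j _
      calc ∑ l ∈ J, w j * w l * (En j - En l) ^ 2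
          = ∑ l ∈ J, ((w j * (En j) ^ 2) * Real.exp (-(En l) * t) +
              w j * ((En l) ^ 2 * Real.exp (-(En l) * t)) -
              (2 * (w j * En j)) * (En l * Real.exp (-(En l) * t))) :=
            Finset.sum_congr rfl fun l _ => by simp only [hw]; ring
        _ = _ := by
            rw [Finset.sum_sub_distrib, Finset.sum_add_distrib, ← Finset.mul_sum,
              ← Finset.mul_sum, ← Finset.mul_sum]
            rfl
    rw [Finset.sum_congr rfl inner, Finset.sum_sub_distrib, Finset.sum_add_distrib,
      ← Finset.sum_mul, ← Finset.sum_mul, ← Finset.sum_mul]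
    have e1 : ∑ j ∈ J, w j * (En j) ^ 2 = Ff En J t :=
      Finset.sum_congr rfl fun j _ => by rw [hw]; ring
    have e2 : ∑ j ∈ J, w j = Zf En J t := rfl
    have e3 : ∑ j ∈ J, 2 * (w j * En j) = 2 * Af En J t := by
      rw [Af, Finset.mul_sum]; exact Finset.sum_congr rfl fun j _ => by rw [hw]; ring
    rw [e1, e3]
    rw [e2]
    ring
  have hpos : 0 < ∑ j ∈ J, ∑ l ∈ J, w j * w l * (En j - En l) ^ 2 := by
    apply Finset.sum_pos'
    · intro j _
      exact Finset.sum_nonneg fun l _ => by positivity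
    · refine ⟨j₀, h₀, ?_⟩
      apply Finset.sum_pos'
      · intro l _; positivity
      · refine ⟨j₁, h₁, ?_⟩
        have : En j₀ - En j₁ ≠ 0 := sub_ne_zero.mpr hne
        positivity
  nlinarith [key, hpos]

lemma qf_continuous (hJ : J.Nonempty) (j : Fin n) : Continuous (fun t => qf En J t j) := by
  apply Continuous.div
  · fun_prop
  · unfold Zf; fun_prop
  · exact fun t => (Zf_pos hJ t).ne'

lemma hfn_continuous (hJ : J.Nonempty) : Continuous (hfn En J) := by
  apply continuous_finset_sum
  intro j _
  exact Real.continuous_negMulLog.comp (qf_continuous hJ j)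

lemma hfn_strictAntiOn (hJ : J.Nonempty) {j₀ j₁ : Fin n} (h₀ : j₀ ∈ J) (h₁ : j₁ ∈ J)
    (hne : En j₀ ≠ En j₁) : StrictAntiOn (hfn En J) (Set.Ici 0) := by
  apply strictAntiOn_of_deriv_neg (convex_Ici 0) (hfn_continuous hJ).continuousOn
  intro t ht
  rw [interior_Ici] at ht
  rw [(hfn_hasDeriv hJ t).deriv]
  have hZ := Zf_pos (En := En) hJ t
  have hv := var_pos (En := En) t h₀ h₁ hne
  apply div_neg_of_neg_of_pos
  · have : (Af En J t) ^ 2 - Ff En J t * Zf En J t < 0 := by linarith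
    exact mul_neg_of_pos_of_neg ht this
  · positivity

lemma hfn_zero (hJ : J.Nonempty) : hfn En J 0 = Real.log (J.card : ℝ) := by
  have hc : (J.card : ℝ) ≠ 0 := by
    simp [Finset.card_ne_zero_of_mem hJ.choose_spec]
  have hZ : Zf En J 0 = (J.card : ℝ) := by
    rw [Zf]
    simp
  have hq : ∀ j ∈ J, qf En J 0 j = (J.card : ℝ)⁻¹ := by
    intro j _
    rw [qf, hZ]
    simp [div_eq_mul_inv]
  rw [hfn, Finset.sum_congr rfl fun j hj => by rw [hq j hj]]
  rw [Finset.sum_const, nsmul_eq_mul]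
  rw [Real.negMulLog, Real.log_inv]
  field_simp

lemma exp_tendsto_atTop {j : Fin n} (hE0 : 0 ≤ En j) :
    Tendsto (fun t => Real.exp (-(En j) * t)) atTop
      (nhds (if En j = 0 then 1 else 0)) := by
  rcases eq_or_lt_of_le hE0 with h | h
  · rw [if_pos h.symm, ← h]
    simpa using tendsto_const_nhds (α := ℝ) (f := atTop) (a := (1:ℝ))
  · rw [if_neg h.ne']
    have h1 : Tendsto (fun t : ℝ => -(En j) * t) atTop atBot :=
      tendsto_id.const_mul_atTop_of_neg (neg_neg_of_pos h)
    exact Real.tendsto_exp_atBot.comp h1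

lemma hfn_tendsto_atTop (hE0 : ∀ j ∈ J, 0 ≤ En j)
    (hS : (J.filter fun j => En j = 0).Nonempty) :
    Tendsto (hfn En J) atTop
      (nhds (Real.log ((J.filter fun j => En j = 0).card : ℝ))) := by
  set m : ℝ := ((J.filter fun j => En j = 0).card : ℝ) with hm
  have hmpos : 0 < m := by
    have := Finset.card_pos.mpr hS
    rw [hm]; exact_mod_cast this
  have hZ : Tendsto (Zf En J) atTop (nhds m) := by
    have h1 := tendsto_finset_sum J (fun j (hj : j ∈ J) => exp_tendsto_atTop (hE0 j hj))
    have h2 : ∑ j ∈ J, (if En j = 0 then (1:ℝ) else 0) = m := by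
      rw [hm, Finset.sum_boole]
    rw [h2] at h1
    exact h1
  have hq : ∀ j ∈ J, Tendsto (fun t => qf En J t j) atTop
      (nhds ((if En j = 0 then (1:ℝ) else 0) / m)) := by
    intro j hj
    exact (exp_tendsto_atTop (hE0 j hj)).div hZ hmpos.ne'
  have h3 : Tendsto (hfn En J) atTop
      (nhds (∑ j ∈ J, Real.negMulLog ((if En j = 0 then (1:ℝ) else 0) / m))) := by
    apply tendsto_finset_sum
    intro j hj
    exact (Real.continuous_negMulLog.continuousAt).tendsto.comp (hq j hj)
  have h4 : ∑ j ∈ J, Real.negMulLog ((if En j = 0 then (1:ℝ) else 0) / m)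
      = Real.log m := by
    have hterm : ∀ j ∈ J, Real.negMulLog ((if En j = 0 then (1:ℝ) else 0) / m)
        = if En j = 0 then Real.negMulLog m⁻¹ else 0 := by
      intro j _
      by_cases h : En j = 0 <;> simp [h, one_div]
    rw [Finset.sum_congr rfl hterm, ← Finset.sum_filter, Finset.sum_const, nsmul_eq_mul,
      ← hm]
    rw [Real.negMulLog, Real.log_inv]
    field_simp
  rw [h4] at h3
  exact h3


section PointAnalysis
variable {V : Type*} [NormedAddCommGroup V]

lemma erase_nonempty_of_two_lt (hn : 2 < n) (i : Fin n) :
    (Finset.univ.erase i).Nonempty := by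
  rw [← Finset.card_pos, Finset.card_erase_of_mem (Finset.mem_univ i), Finset.card_univ,
    Fintype.card_fin]
  omega

lemma nearestSet_nonempty (hn : 2 < n) (X : Fin n → V) (i : Fin n) :
    (nearestSet X i).Nonempty := by
  obtain ⟨j, hj, hmin⟩ := Finset.exists_min_image (Finset.univ.erase i)
    (fun j => ‖X i - X j‖) (erase_nonempty_of_two_lt hn i)
  exact ⟨j, Finset.mem_filter.mpr ⟨hj, hmin⟩⟩

lemma sqnorm_eq {a b : ℝ} (ha : 0 ≤ a) (hb : 0 ≤ b) (h : a ^ 2 = b ^ 2) : a = b := by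
  rw [← Real.sqrt_sq ha, ← Real.sqrt_sq hb, h]

variable {X : Fin n → V} {i j0 : Fin n}

/-- shifted energies -/
lemma EE_nonneg (hj0 : j0 ∈ nearestSet X i) {j : Fin n} (hj : j ∈ Finset.univ.erase i) :
    0 ≤ ‖X i - X j‖ ^ 2 - ‖X i - X j0‖ ^ 2 := by
  have h := (Finset.mem_filter.mp hj0).2 j hj
  have := norm_nonneg (X i - X j0)
  nlinarith

lemma EE_zero_iff (hj0 : j0 ∈ nearestSet X i) {j : Fin n}
    (hj : j ∈ Finset.univ.erase i) :
    ‖X i - X j‖ ^ 2 - ‖X i - X j0‖ ^ 2 = 0 ↔ j ∈ nearestSet X i := by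
  obtain ⟨hj0J, hj0min⟩ := Finset.mem_filter.mp hj0
  constructor
  · intro h
    have heq : ‖X i - X j‖ = ‖X i - X j0‖ :=
      sqnorm_eq (norm_nonneg _) (norm_nonneg _) (by linarith)
    exact Finset.mem_filter.mpr ⟨hj, fun l hl => heq ▸ hj0min l hl⟩
  · intro h
    obtain ⟨hjJ, hjmin⟩ := Finset.mem_filter.mp h
    have h1 := hj0min j hj
    have h2 := hjmin j0 hj0J
    have : ‖X i - X j‖ = ‖X i - X j0‖ := le_antisymm h2 h1
    rw [this]; ring

lemma nearestSet_eq_filter (hj0 : j0 ∈ nearestSet X i) :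
    nearestSet X i = (Finset.univ.erase i).filter
      (fun j => ‖X i - X j‖ ^ 2 - ‖X i - X j0‖ ^ 2 = 0) := by
  ext j
  simp only [Finset.mem_filter]
  constructor
  · intro h
    have hjJ := Finset.mem_of_mem_filter j h
    exact ⟨hjJ, (EE_zero_iff hj0 hjJ).mpr h⟩
  · rintro ⟨hjJ, h⟩
    exact (EE_zero_iff hj0 hjJ).mp h

lemma condAffinity_self : condAffinity X σ' i i = 0 := by simp [condAffinity]

lemma condAffinity_eq_qf {σ : ℝ} (hσ : σ ≠ 0) {j : Fin n} (hj : j ≠ i) :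
    condAffinity X σ i j =
      qf (fun l => ‖X i - X l‖ ^ 2 - ‖X i - X j0‖ ^ 2) (Finset.univ.erase i)
        ((2 * σ ^ 2)⁻¹) j := by
  have hJ : (Finset.univ.erase i).Nonempty := ⟨j, Finset.mem_erase.mpr ⟨hj, Finset.mem_univ j⟩⟩
  rw [condAffinity, if_neg hj, if_neg hσ, qf, Zf]
  have h1 : (0:ℝ) < ∑ l ∈ Finset.univ.erase i, Real.exp (-‖X i - X l‖ ^ 2 / (2 * σ ^ 2)) :=
    Finset.sum_pos (fun l _ => Real.exp_pos _) hJ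
  have h2 : (0:ℝ) < ∑ l ∈ Finset.univ.erase i,
      Real.exp (-(‖X i - X l‖ ^ 2 - ‖X i - X j0‖ ^ 2) * (2 * σ ^ 2)⁻¹) :=
    Finset.sum_pos (fun l _ => Real.exp_pos _) hJ
  rw [div_eq_div_iff h1.ne' h2.ne']
  rw [Finset.mul_sum, Finset.mul_sum]
  apply Finset.sum_congr rfl
  intro l _
  rw [← Real.exp_add, ← Real.exp_add]
  congr 1
  have h2σ : (2 * σ ^ 2) ≠ 0 := by positivity
  field_simp
  ring

lemma entropy2_condAffinity_pos {σ : ℝ} (hn : 2 < n) (hσ : σ ≠ 0)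
    (hj0 : j0 ∈ nearestSet X i) :
    entropy2 (condAffinity X σ i) =
      hfn (fun l => ‖X i - X l‖ ^ 2 - ‖X i - X j0‖ ^ 2) (Finset.univ.erase i)
        ((2 * σ ^ 2)⁻¹) / Real.log 2 := by
  rw [entropy2, ← Finset.sum_erase_add _ _ (Finset.mem_univ i), condAffinity_self]
  rw [hfn, Finset.sum_div]
  rw [zero_mul, add_zero, ← Finset.sum_neg_distrib]
  apply Finset.sum_congr rfl
  intro j hj
  have hji : j ≠ i := (Finset.mem_erase.mp hj).1
  rw [condAffinity_eq_qf hσ hji, Real.negMulLog, Real.logb]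
  ring

lemma entropy2_condAffinity_zero (hn : 2 < n) (hj0 : j0 ∈ nearestSet X i) :
    entropy2 (condAffinity X 0 i) =
      Real.log ((nearestSet X i).card : ℝ) / Real.log 2 := by
  have hSJ : nearestSet X i ⊆ Finset.univ.erase i := Finset.filter_subset _ _
  have hmpos : (0:ℝ) < ((nearestSet X i).card : ℝ) := by
    have := Finset.card_pos.mpr ⟨j0, hj0⟩
    exact_mod_cast this
  rw [entropy2, ← Finset.sum_erase_add _ _ (Finset.mem_univ i), condAffinity_self]
  rw [zero_mul, add_zero]
  have hterm : ∀ j ∈ Finset.univ.erase i,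
      condAffinity X 0 i j * Real.logb 2 (condAffinity X 0 i j) =
        if j ∈ nearestSet X i then
          (((nearestSet X i).card : ℝ)⁻¹ * Real.logb 2 (((nearestSet X i).card : ℝ)⁻¹))
        else 0 := by
    intro j hj
    have hji : j ≠ i := (Finset.mem_erase.mp hj).1
    rw [condAffinity, if_neg hji, if_pos rfl]
    by_cases h : j ∈ nearestSet X i <;> simp [h]
  rw [Finset.sum_congr rfl hterm, ← Finset.sum_filter,
    Finset.filter_mem_eq_inter, Finset.inter_eq_right.mpr hSJ, Finset.sum_const,
    nsmul_eq_mul]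
  rw [Real.logb, Real.log_inv]
  field_simp

end PointAnalysis

end AUX

section Calibration
variable {V : Type*} [NormedAddCommGroup V]

lemma calibrated_main (hn : 2 < n) (X : Fin n → V) (i : Fin n) {ρ : ℝ}
    (hρ1 : 1 < ρ) (hρ2 : ρ < (n : ℝ) - 1) :
    ∃ σ0, IsCalibrated X ρ i σ0 ∧
      ∀ τ, IsCalibrated X ρ i τ → condAffinity X τ i = condAffinity X σ0 i := by
  have hJ : (Finset.univ.erase i).Nonempty := erase_nonempty_of_two_lt hn i
  obtain ⟨j0, hj0⟩ := nearestSet_nonempty hn X i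
  set J := Finset.univ.erase i with hJdef
  set EE : Fin n → ℝ := fun l => ‖X i - X l‖ ^ 2 - ‖X i - X j0‖ ^ 2 with hEE
  have hj0J : j0 ∈ J := Finset.mem_of_mem_filter j0 hj0
  have hEEj0 : EE j0 = 0 := sub_self _
  by_cases hall : ∀ j ∈ J, j ∈ nearestSet X i
  · -- all points equidistant : condAffinity independent of σ
    have hSJ : nearestSet X i = J :=
      Finset.Subset.antisymm (Finset.filter_subset _ _) hall
    have hconst : ∀ σ : ℝ, condAffinity X σ i = condAffinity X 0 i := by
      intro σ
      funext j
      by_cases hji : j = i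
      · subst hji; rw [condAffinity_self, condAffinity_self]
      · by_cases hσ : σ = 0
        · rw [hσ]
        · have hjJ : j ∈ J := Finset.mem_erase.mpr ⟨hji, Finset.mem_univ j⟩
          rw [condAffinity_eq_qf (j0 := j0) hσ hji, qf, Zf]
          have hz : ∀ l ∈ J, EE l = 0 := fun l hl =>
            (EE_zero_iff hj0 hl).mpr (hall l hl)
          have h1 : Real.exp (-(EE j) * (2 * σ ^ 2)⁻¹) = 1 := by
            rw [hz j hjJ]; simp
          have h2 : ∑ l ∈ J, Real.exp (-(EE l) * (2 * σ ^ 2)⁻¹) = (J.card : ℝ) := by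
            have hone : ∀ l ∈ J, Real.exp (-(EE l) * (2 * σ ^ 2)⁻¹) = 1 := by
              intro l hl; rw [hz l hl]; norm_num
            rw [Finset.sum_congr rfl hone]
            simp
          rw [h1, h2, condAffinity, if_neg hji, if_pos rfl, if_pos (hSJ ▸ hjJ), hSJ]
          rw [one_div]
    refine ⟨0, ⟨le_refl 0, fun σ' _ => by rw [hconst σ']⟩, fun τ hτ => hconst τ⟩
  · push_neg at hall
    obtain ⟨j₁, hj₁J, hj₁⟩ := hall
    have hEEj₁ : EE j₁ ≠ 0 := fun h => hj₁ ((EE_zero_iff hj0 hj₁J).mp h)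
    have hne : EE j0 ≠ EE j₁ := by rw [hEEj0]; exact fun h => hEEj₁ h.symm
    set S := nearestSet X i with hS
    set m : ℝ := (S.card : ℝ) with hm
    have hm1 : (1:ℝ) ≤ m := by
      have := Finset.card_pos.mpr ⟨j0, hj0⟩
      rw [hm]; exact_mod_cast this
    have hfilter : J.filter (fun j => EE j = 0) = S := (nearestSet_eq_filter hj0).symm
    set h := hfn EE J with hh
    have hanti : StrictAntiOn h (Set.Ici 0) := hfn_strictAntiOn hJ hj0J hj₁J hne
    have hcont : Continuous h := hfn_continuous hJ
    have hlim : Filter.Tendsto h Filter.atTop (nhds (Real.log m)) := by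
      have := hfn_tendsto_atTop (En := EE) (J := J)
        (fun j hjJ => EE_nonneg hj0 hjJ) (by rw [hfilter]; exact ⟨j0, hj0⟩)
      rwa [hfilter] at this
    have hcardJ : (J.card : ℝ) = (n : ℝ) - 1 := by
      rw [hJdef, Finset.card_erase_of_mem (Finset.mem_univ i), Finset.card_univ,
        Fintype.card_fin]
      have : 1 ≤ n := by omega
      push_cast [this]
      ring
    have hzero : h 0 = Real.log ((n:ℝ) - 1) := by rw [hh, hfn_zero hJ, hcardJ]
    have hgt : ∀ t : ℝ, 0 ≤ t → Real.log m < h t := by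
      intro t ht
      have hmem1 : t ∈ Set.Ici (0:ℝ) := ht
      have hmem2 : t + 1 ∈ Set.Ici (0:ℝ) := by simp; linarith
      have h1 : h (t + 1) < h t := hanti hmem1 hmem2 (lt_add_one t)
      have h2 : Real.log m ≤ h (t + 1) := by
        apply le_of_tendsto hlim
        rw [Filter.eventually_atTop]
        refine ⟨t + 1, fun s hs => ?_⟩
        rcases eq_or_lt_of_le hs with hs' | hs'
        · rw [← hs']
        · exact (hanti hmem2 (by simp; linarith : s ∈ Set.Ici (0:ℝ)) hs').le
      linarith
    set L := Real.log ρ with hL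
    have hlog2 : (0:ℝ) < Real.log 2 := Real.log_pos one_lt_two
    have hLlt : L < Real.log ((n:ℝ) - 1) := Real.log_lt_log (by linarith) hρ2
    have hlogb : Real.logb 2 ρ = L / Real.log 2 := rfl
    have hpsi_pos : ∀ σ : ℝ, σ ≠ 0 →
        entropy2 (condAffinity X σ i) = h ((2 * σ ^ 2)⁻¹) / Real.log 2 := fun σ hσ =>
      entropy2_condAffinity_pos hn hσ hj0
    have hpsi_zero : entropy2 (condAffinity X 0 i) = Real.log m / Real.log 2 :=
      entropy2_condAffinity_zero hn hj0
    have habs : ∀ a : ℝ, |a / Real.log 2 - L / Real.log 2| = |a - L| / Real.log 2 := by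
      intro a
      rw [div_sub_div_same, abs_div, abs_of_pos hlog2]
    by_cases hcase : L ≤ Real.log m
    · -- calibrated bandwidth is 0
      have key : ∀ σ' : ℝ, σ' ≠ 0 →
          |entropy2 (condAffinity X 0 i) - Real.logb 2 ρ| <
            |entropy2 (condAffinity X σ' i) - Real.logb 2 ρ| := by
        intro σ' hσ'
        have ht' : (0:ℝ) < (2 * σ' ^ 2)⁻¹ := by positivity
        have hgt' := hgt _ ht'.le
        rw [hpsi_zero, hpsi_pos σ' hσ', hlogb, habs, habs]
        rw [abs_of_nonneg (by linarith), abs_of_nonneg (by linarith)]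
        have h3 : Real.log m - L < h ((2 * σ' ^ 2)⁻¹) - L := by linarith
        exact div_lt_div_of_pos_right h3 hlog2
      refine ⟨0, ⟨le_refl 0, fun σ' _ => ?_⟩, fun τ hτ => ?_⟩
      · by_cases hσ' : σ' = 0
        · rw [hσ']
        · exact (key σ' hσ').le
      · have hτ0 : τ = 0 := by
          by_contra hτ0
          have h1 := hτ.2 0 (le_refl 0)
          have h2 := key τ hτ0
          linarith
        rw [hτ0]
    · push_neg at hcase
      obtain ⟨t₂, ht₂⟩ := ((hlim.eventually_lt_const hcase).and
        (Filter.eventually_ge_atTop 1)).exists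
      have ht₂pos : (0:ℝ) ≤ t₂ := by linarith [ht₂.2]
      have hIcc : L ∈ Set.Icc (h t₂) (h 0) := by
        constructor
        · exact ht₂.1.le
        · rw [hzero]; exact hLlt.le
      obtain ⟨tstar, htmem, htstar⟩ :=
        intermediate_value_Icc' ht₂pos hcont.continuousOn hIcc
      have htpos : 0 < tstar := by
        rcases eq_or_lt_of_le htmem.1 with h' | h'
        · exfalso
          rw [← h'] at htstar
          rw [hzero] at htstar
          exact hLlt.ne' htstar
        · exact h'
      set σ0 := Real.sqrt ((2 * tstar)⁻¹) with hσ0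
      have hσ0pos : 0 < σ0 := Real.sqrt_pos.mpr (by positivity)
      have hσ0sq : σ0 ^ 2 = (2 * tstar)⁻¹ := Real.sq_sqrt (by positivity)
      have hσ0t : (2 * σ0 ^ 2)⁻¹ = tstar := by
        rw [hσ0sq]
        field_simp
      have hpsiσ0 : entropy2 (condAffinity X σ0 i) = L / Real.log 2 := by
        rw [hpsi_pos σ0 hσ0pos.ne', hσ0t, htstar]
      have hcal : IsCalibrated X ρ i σ0 := by
        refine ⟨hσ0pos.le, fun σ' _ => ?_⟩
        rw [hpsiσ0, hlogb, sub_self, abs_zero]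
        exact abs_nonneg _
      refine ⟨σ0, hcal, fun τ hτ => ?_⟩
      have h1 := hτ.2 σ0 hσ0pos.le
      rw [hpsiσ0, hlogb, sub_self, abs_zero] at h1
      have h2 : entropy2 (condAffinity X τ i) = L / Real.log 2 := by
        have := abs_nonneg (entropy2 (condAffinity X τ i) - Real.logb 2 ρ)
        have h3 : |entropy2 (condAffinity X τ i) - Real.logb 2 ρ| = 0 := le_antisymm h1 this
        rw [abs_eq_zero, sub_eq_zero] at h3
        rw [h3, hlogb]
      have hτ0 : τ ≠ 0 := by
        intro hτ0
        rw [hτ0, hpsi_zero] at h2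
        have : Real.log m = L := by
          field_simp at h2
          exact h2
        linarith
      rw [hpsi_pos τ hτ0] at h2
      have h4 : h ((2 * τ ^ 2)⁻¹) = L := by
        have h2' := congrArg (fun x => x * Real.log 2) h2
        simpa [div_mul_cancel₀, hlog2.ne'] using h2'
      have h5 : (2 * τ ^ 2)⁻¹ = tstar := by
        apply hanti.injOn (Set.mem_Ici.mpr (by positivity)) (Set.mem_Ici.mpr htpos.le)
        rw [h4, htstar]
      have hτpos : 0 < τ := lt_of_le_of_ne hτ.1 (Ne.symm hτ0)
      have h6 : τ = σ0 := by
        have h7 : τ ^ 2 = σ0 ^ 2 := by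
          rw [hσ0sq]
          have h2τ : (2 : ℝ) * τ ^ 2 ≠ 0 := by positivity
          field_simp at h5 ⊢
          linarith [h5]
        exact sqnorm_eq hτpos.le hσ0pos.le h7
      rw [h6]

end Calibration

section Transfer
variable {V W : Type*} [NormedAddCommGroup V] [NormedAddCommGroup W]

lemma nearestSet_transfer {X : Fin n → V} {Y : Fin n → W} {C : ℝ} (hC1 : C < 1)
    (hdist : ∀ i j : Fin n, i ≠ j → ‖Y i - Y j‖ ^ 2 = (1 - C) * ‖X i - X j‖ ^ 2 + C)
    (i : Fin n) : nearestSet Y i = nearestSet X i := by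
  unfold nearestSet
  apply Finset.filter_congr
  intro j hj
  have hji : j ≠ i := (Finset.mem_erase.mp hj).1
  have key : ∀ l : Fin n, l ≠ i →
      (‖Y i - Y j‖ ≤ ‖Y i - Y l‖ ↔ ‖X i - X j‖ ≤ ‖X i - X l‖) := by
    intro l hli
    rw [← pow_le_pow_iff_left₀ (norm_nonneg (Y i - Y j)) (norm_nonneg (Y i - Y l))
        two_ne_zero,
      ← pow_le_pow_iff_left₀ (norm_nonneg (X i - X j)) (norm_nonneg (X i - X l))
        two_ne_zero,
      hdist i j (Ne.symm hji), hdist i l (Ne.symm hli)]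
    constructor <;> intro h <;> nlinarith
  constructor
  · intro h l hl
    exact (key l (Finset.mem_erase.mp hl).1).mp (h l hl)
  · intro h l hl
    exact (key l (Finset.mem_erase.mp hl).1).mpr (h l hl)

lemma condAffinity_transfer {X : Fin n → V} {Y : Fin n → W} {C : ℝ} (hC0 : 0 ≤ C)
    (hC1 : C < 1)
    (hdist : ∀ i j : Fin n, i ≠ j → ‖Y i - Y j‖ ^ 2 = (1 - C) * ‖X i - X j‖ ^ 2 + C)
    (i : Fin n) (σ : ℝ) :
    condAffinity Y σ i = condAffinity X (σ / Real.sqrt (1 - C)) i := by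
  have h1C : (0:ℝ) < 1 - C := by linarith
  set s := Real.sqrt (1 - C) with hs
  have hspos : 0 < s := Real.sqrt_pos.mpr h1C
  have hs2 : s ^ 2 = 1 - C := Real.sq_sqrt h1C.le
  funext j
  by_cases hji : j = i
  · subst hji; rw [condAffinity_self, condAffinity_self]
  · by_cases hσ : σ = 0
    · subst hσ
      rw [zero_div, condAffinity, if_neg hji, if_pos rfl, condAffinity, if_neg hji,
        if_pos rfl, nearestSet_transfer hC1 hdist i]
    · have hσs : σ / s ≠ 0 := div_ne_zero hσ hspos.ne'
      have hJ : (Finset.univ.erase i).Nonempty :=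
        ⟨j, Finset.mem_erase.mpr ⟨hji, Finset.mem_univ j⟩⟩
      rw [condAffinity, if_neg hji, if_neg hσ, condAffinity, if_neg hji, if_neg hσs]
      have hpos1 : (0:ℝ) < ∑ l ∈ Finset.univ.erase i,
          Real.exp (-‖Y i - Y l‖ ^ 2 / (2 * σ ^ 2)) :=
        Finset.sum_pos (fun l _ => Real.exp_pos _) hJ
      have hpos2 : (0:ℝ) < ∑ l ∈ Finset.univ.erase i,
          Real.exp (-‖X i - X l‖ ^ 2 / (2 * (σ / s) ^ 2)) :=
        Finset.sum_pos (fun l _ => Real.exp_pos _) hJ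
      rw [div_eq_div_iff hpos1.ne' hpos2.ne', Finset.mul_sum, Finset.mul_sum]
      apply Finset.sum_congr rfl
      intro l hl
      have hli : l ≠ i := (Finset.mem_erase.mp hl).1
      rw [← Real.exp_add, ← Real.exp_add]
      congr 1
      rw [hdist i j (Ne.symm hji), hdist i l (Ne.symm hli), div_pow, hs2]
      have hσ2 : σ ^ 2 ≠ 0 := pow_ne_zero 2 hσ
      field_simp
      ring

lemma condAffinity_sigmaStar_transfer (hn : 2 < n) {X : Fin n → V} {Y : Fin n → W}
    {C : ℝ} (hC0 : 0 ≤ C) (hC1 : C < 1)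
    (hdist : ∀ i j : Fin n, i ≠ j → ‖Y i - Y j‖ ^ 2 = (1 - C) * ‖X i - X j‖ ^ 2 + C)
    {ρ : ℝ} (hρ1 : 1 < ρ) (hρ2 : ρ < (n : ℝ) - 1) (i : Fin n) :
    condAffinity Y (sigmaStar Y ρ i) i = condAffinity X (sigmaStar X ρ i) i := by
  have h1C : (0:ℝ) < 1 - C := by linarith
  set s := Real.sqrt (1 - C) with hs
  have hspos : 0 < s := Real.sqrt_pos.mpr h1C
  have hent : ∀ σ : ℝ, entropy2 (condAffinity Y σ i) =
      entropy2 (condAffinity X (σ / s) i) := fun σ => by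
    rw [condAffinity_transfer hC0 hC1 hdist i σ]
  obtain ⟨σ0, hσ0cal, hσ0rig⟩ := calibrated_main hn X i hρ1 hρ2
  have hXcal : IsCalibrated X ρ i (sigmaStar X ρ i) :=
    Classical.epsilon_spec (⟨σ0, hσ0cal⟩ : ∃ σ, IsCalibrated X ρ i σ)
  have hfwd : IsCalibrated Y ρ i (s * σ0) := by
    refine ⟨mul_nonneg hspos.le hσ0cal.1, fun σ' hσ' => ?_⟩
    rw [hent, hent, mul_div_cancel_left₀ _ hspos.ne']
    exact hσ0cal.2 (σ' / s) (div_nonneg hσ' hspos.le)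
  have hYcal : IsCalibrated Y ρ i (sigmaStar Y ρ i) :=
    Classical.epsilon_spec (⟨s * σ0, hfwd⟩ : ∃ σ, IsCalibrated Y ρ i σ)
  have hbwd : IsCalibrated X ρ i (sigmaStar Y ρ i / s) := by
    refine ⟨div_nonneg hYcal.1 hspos.le, fun σ' hσ' => ?_⟩
    have h1 := hYcal.2 (s * σ') (mul_nonneg hspos.le hσ')
    rw [hent, hent, mul_div_cancel_left₀ _ hspos.ne'] at h1
    exact h1
  rw [condAffinity_transfer hC0 hC1 hdist i (sigmaStar Y ρ i), hσ0rig _ hbwd,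
    hσ0rig _ hXcal]

lemma inAffinity_transfer (hn : 2 < n) {X : Fin n → V} {Y : Fin n → W}
    {C : ℝ} (hC0 : 0 ≤ C) (hC1 : C < 1)
    (hdist : ∀ i j : Fin n, i ≠ j → ‖Y i - Y j‖ ^ 2 = (1 - C) * ‖X i - X j‖ ^ 2 + C)
    {ρ : ℝ} (hρ1 : 1 < ρ) (hρ2 : ρ < (n : ℝ) - 1) :
    inAffinity Y ρ = inAffinity X ρ := by
  funext i j
  rw [inAffinity, inAffinity]
  by_cases hij : i = j
  · rw [if_pos hij, if_pos hij]
  · rw [if_neg hij, if_neg hij,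
      congrFun (condAffinity_sigmaStar_transfer hn hC0 hC1 hdist hρ1 hρ2 j) i,
      congrFun (condAffinity_sigmaStar_transfer hn hC0 hC1 hdist hρ1 hρ2 i) j]

lemma TSNE_transfer (hn : 2 < n) {d : ℕ} {X : Fin n → V} {Y : Fin n → W}
    {C : ℝ} (hC0 : 0 ≤ C) (hC1 : C < 1)
    (hdist : ∀ i j : Fin n, i ≠ j → ‖Y i - Y j‖ ^ 2 = (1 - C) * ‖X i - X j‖ ^ 2 + C)
    {ρ : ℝ} (hρ1 : 1 < ρ) (hρ2 : ρ < (n : ℝ) - 1) :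
    TSNE d ρ X = TSNE d ρ Y := by
  have hloss : tsneLoss (d := d) X ρ = tsneLoss Y ρ := by
    funext Z
    rw [tsneLoss, tsneLoss, inAffinity_transfer hn hC0 hC1 hdist hρ1 hρ2]
  rw [TSNE, TSNE, hloss]

end Transfer

section Construction
open Finset

set_option maxHeartbeats 1000000 in
lemma g_construction (hn : 2 < n) (X : Fin n → EuclideanSpace ℝ (Fin (n - 1))) :
    ∃ g : ℝ → (Fin n → EuclideanSpace ℝ (Fin (n - 1))),
      ContinuousOn g (Set.Icc 0 1) ∧
      ∀ C ∈ Set.Icc (0:ℝ) 1, ∀ i j : Fin n, i ≠ j →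
        ‖g C i - g C j‖ ^ 2 = (1 - C) * ‖X i - X j‖ ^ 2 + C := by
  have hn0 : (0:ℝ) < (n:ℝ) := by
    have : 0 < n := by omega
    exact_mod_cast this
  -- centered points
  set c : EuclideanSpace ℝ (Fin (n-1)) := (n:ℝ)⁻¹ • ∑ i, X i with hc
  set xc : Fin n → EuclideanSpace ℝ (Fin (n-1)) := fun i => X i - c with hxc
  have hxc_sum : ∑ i, xc i = 0 := by
    rw [hxc]
    rw [Finset.sum_sub_distrib, Finset.sum_const, Finset.card_univ, Fintype.card_fin]
    rw [hc, ← Nat.cast_smul_eq_nsmul ℝ, smul_smul, mul_inv_cancel₀ hn0.ne', one_smul,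
      sub_self]
  set G : Matrix (Fin n) (Fin n) ℝ := Matrix.of (fun i j => ⟪xc i, xc j⟫) with hG
  have hGdef : ∀ i j, G i j = ⟪xc i, xc j⟫ := fun i j => rfl
  have hGsym : ∀ i j, G i j = G j i := by
    intro i j
    rw [hGdef, hGdef]
    exact real_inner_comm _ _
  have hGrow : ∀ i, ∑ m, G i m = 0 := by
    intro i
    have e0 : ∑ m, G i m = ∑ m, ⟪xc i, xc m⟫ := Finset.sum_congr rfl fun m _ => hGdef i m
    rw [e0, ← inner_sum, hxc_sum, inner_zero_right]
  have hGpsd : ∀ v : Fin n → ℝ, 0 ≤ ∑ i, ∑ m, v i * v m * G i m := by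
    intro v
    have key : ∑ i, ∑ m, v i * v m * G i m = ⟪∑ i, v i • xc i, ∑ m, v m • xc m⟫ := by
      rw [sum_inner]
      apply Finset.sum_congr rfl
      intro i _
      rw [inner_sum]
      apply Finset.sum_congr rfl
      intro m _
      rw [real_inner_smul_left, real_inner_smul_right, hGdef]
      ring
    rw [key]
    exact real_inner_self_nonneg
  have hGdist : ∀ i j, ‖X i - X j‖ ^ 2 = G i i + G j j - 2 * G i j := by
    intro i j
    have hxx : X i - X j = xc i - xc j := by rw [hxc]; exact (sub_sub_sub_cancel_right (X i) (X j) c).symm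
    have h1 : G i i = ‖xc i‖ ^ 2 := by rw [hGdef]; exact real_inner_self_eq_norm_sq _
    have h2 : G j j = ‖xc j‖ ^ 2 := by rw [hGdef]; exact real_inner_self_eq_norm_sq _
    rw [hxx, norm_sub_sq_real, h1, h2, hGdef]
    ring
  set T : Matrix (Fin n) (Fin n) ℝ := Matrix.of (fun i j => G i j - 1 / (2 * n)) with hT
  have hTdef : ∀ i j, T i j = G i j - 1 / (2 * n) := fun i j => rfl
  have hTherm : T.IsHermitian := by
    show T.conjTranspose = T
    ext i j
    rw [Matrix.conjTranspose_apply, hTdef, hTdef, hGsym j i]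
    simp
  set b := hTherm.eigenvectorBasis with hb
  set μ := hTherm.eigenvalues with hμdef
  have hmu : ∀ k l, ∑ m, T l m * b k m = μ k * b k l := by
    intro k l
    have h := congrFun (hTherm.mulVec_eigenvectorBasis k) l
    simpa [Matrix.mulVec, dotProduct] using h
  have euclid_inner : ∀ x y : EuclideanSpace ℝ (Fin n), ⟪x, y⟫ = ∑ l, x l * y l := by
    intro x y
    simp [PiLp.inner_apply, RCLike.inner_apply, conj_trivial]
    exact Finset.sum_congr rfl fun _ _ => mul_comm _ _
  have horth : ∀ k l, ∑ m, b k m * b l m = if k = l then 1 else 0 := by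
    intro k l
    have h := b.orthonormal
    rw [orthonormal_iff_ite] at h
    have h2 := h k l
    rw [euclid_inner] at h2
    simpa using h2
  have hrow : ∀ i m, ∑ k, b k i * b k m = if i = m then 1 else 0 := by
    intro i m
    have h := b.sum_repr' (EuclideanSpace.single i (1:ℝ))
    have h2 : ∑ k, (⟪b k, EuclideanSpace.single i (1:ℝ)⟫ • b k) m
        = EuclideanSpace.single i (1:ℝ) m := by
      rw [← Finset.sum_apply m Finset.univ
        (fun k => ⟪b k, EuclideanSpace.single i (1:ℝ)⟫ • b k)]
      rw [← WithLp.ofLp_sum, h]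
    have hbi : ∀ k, ⟪b k, EuclideanSpace.single i (1:ℝ)⟫ = b k i := by
      intro k
      rw [euclid_inner]
      simp [EuclideanSpace.single_apply]
    simp only [hbi, PiLp.smul_apply, smul_eq_mul, EuclideanSpace.single_apply] at h2
    rw [h2]
    simp [eq_comm]
  have hTcol : ∀ m, ∑ l, T l m = -(1/2) := by
    intro m
    rw [Finset.sum_congr rfl (fun l (_ : l ∈ univ) => hTdef l m), Finset.sum_sub_distrib]
    have h1 : ∑ l, G l m = 0 := by
      rw [Finset.sum_congr rfl (fun l (_ : l ∈ univ) => hGsym l m)]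
      exact hGrow m
    rw [h1, Finset.sum_const, Finset.card_univ, Fintype.card_fin, nsmul_eq_mul]
    field_simp
    ring
  have hdich : ∀ k, (∑ l, b k l = 0 ∧ 0 ≤ μ k) ∨
      (μ k = -(1/2) ∧ ∀ l m, b k l = b k m) := by
    intro k
    set su := ∑ l, b k l with hsu
    have hnorm1 : ∑ l, (b k l) ^ 2 = 1 := by
      have h := horth k k
      rw [if_pos rfl] at h
      rw [← h]
      exact Finset.sum_congr rfl fun l _ => (sq (b k l)).symm ▸ by ring
    have hq : μ k = (∑ l, ∑ m, b k l * b k m * G l m) - su ^ 2 / (2 * n) := by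
      have h1 : ∑ l, b k l * (∑ m, T l m * b k m) = μ k := by
        have e1 : ∀ l, b k l * (∑ m, T l m * b k m) = μ k * (b k l) ^ 2 := by
          intro l; rw [hmu k l]; ring
        rw [Finset.sum_congr rfl (fun l (_ : l ∈ univ) => e1 l), ← Finset.mul_sum,
          hnorm1, mul_one]
      have h2 : ∑ l, b k l * (∑ m, T l m * b k m) =
          (∑ l, ∑ m, b k l * b k m * G l m) - su ^ 2 / (2 * n) := by
        have hinner : ∀ l, b k l * (∑ m, T l m * b k m) =
            (∑ m, b k l * b k m * G l m) - (1/(2*n)) * (b k l * su) := by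
          intro l
          rw [Finset.mul_sum]
          rw [show (∑ m, b k l * (T l m * b k m)) =
            ∑ m, (b k l * b k m * G l m - (1/(2*n)) * (b k l * b k m)) from
            Finset.sum_congr rfl fun m _ => by rw [hTdef]; ring]
          rw [Finset.sum_sub_distrib, ← Finset.mul_sum, ← Finset.mul_sum, hsu]
        have e2 : ∑ l, (1/(2*(n:ℝ))) * (b k l * su) = (1/(2*n)) * su * su := by
          rw [Finset.sum_congr rfl (fun l (_ : l ∈ univ) =>
            show (1/(2*(n:ℝ))) * (b k l * su) = ((1/(2*(n:ℝ))) * su) * b k l by ring),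
            ← Finset.mul_sum, ← hsu]
        rw [Finset.sum_congr rfl (fun l (_ : l ∈ univ) => hinner l), Finset.sum_sub_distrib,
          e2]
        ring
      rw [← h1, h2]
    by_cases hsu0 : su = 0
    · left
      refine ⟨hsu0, ?_⟩
      rw [hq, hsu0]
      have hGq0 : 0 ≤ ∑ l, ∑ m, b k l * b k m * G l m := hGpsd (fun l => b k l)
      have e3 : (0:ℝ) ^ 2 / (2 * (n:ℝ)) = 0 := by norm_num
      rw [e3]
      linarith
    · right
      have h3 : ∑ l, (∑ m, T l m * b k m) = μ k * su := by
        rw [Finset.sum_congr rfl (fun l (_ : l ∈ univ) => hmu k l), ← Finset.mul_sum, hsu]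
      have h4 : ∑ l, (∑ m, T l m * b k m) = -(1/2) * su := by
        rw [Finset.sum_comm]
        rw [Finset.sum_congr rfl (fun m (_ : m ∈ univ) => by
          rw [← Finset.sum_mul, hTcol m])]
        rw [← Finset.mul_sum, hsu]
      have hμk : μ k = -(1/2) := by
        have h5 := h3.symm.trans h4
        exact mul_right_cancel₀ hsu0 h5
      refine ⟨hμk, ?_⟩
      have hGq : 0 ≤ ∑ l, ∑ m, b k l * b k m * G l m := hGpsd (fun l => b k l)
      have hsun : (n:ℝ) ≤ su ^ 2 := by
        rw [hμk] at hq
        have h2n : 0 < 2 * (n:ℝ) := by positivity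
        have h5 : (1:ℝ)/2 ≤ su ^ 2 / (2 * n) := by linarith
        rw [div_le_div_iff₀ (by norm_num) h2n] at h5
        linarith
      have hkey : ∑ l, (b k l - su / n) ^ 2 = 1 - su ^ 2 / n := by
        rw [Finset.sum_congr rfl (fun l (_ : l ∈ univ) =>
          show (b k l - su/n)^2 = (b k l)^2 - (2*(su/n))*(b k l) + (su/n)^2 by ring)]
        rw [Finset.sum_add_distrib, Finset.sum_sub_distrib, hnorm1, ← Finset.mul_sum,
          ← hsu, Finset.sum_const, Finset.card_univ, Fintype.card_fin, nsmul_eq_mul]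
        field_simp
        ring
      have hnn : ∀ x ∈ univ, (0:ℝ) ≤ (b k x - su/n)^2 := fun x _ => sq_nonneg _
      have hle : ∑ l, (b k l - su/n)^2 ≤ 0 := by
        rw [hkey]
        have h7 : (1:ℝ) ≤ su^2/n := by
          rw [le_div_iff₀ hn0]
          linarith
        linarith
      have hzero := (Finset.sum_eq_zero_iff_of_nonneg hnn).mp
        (le_antisymm hle (Finset.sum_nonneg hnn))
      have hconst : ∀ l, b k l = su / n := by
        intro l
        have h8 := hzero l (mem_univ l)
        have h9 := pow_eq_zero_iff (n := 2) (by norm_num) |>.mp h8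
        linarith [h9]
      intro l m
      rw [hconst l, hconst m]
  -- the interpolating family
  set fC : ℝ → ℝ → ℝ := fun C v => if v < 0 then 0 else Real.sqrt ((1 - C) * v + C / 2)
    with hfC
  set r : ℝ → Fin n → EuclideanSpace ℝ (Fin n) :=
    fun C i => ∑ k, (fC C (μ k) * b k i) • (b k : EuclideanSpace ℝ (Fin n)) with hr
  set ones : EuclideanSpace ℝ (Fin n) := WithLp.toLp 2 (fun _ => (1:ℝ)) with hones
  have honesne : ones ≠ 0 := by
    intro h
    have := congrArg (fun v : EuclideanSpace ℝ (Fin n) => v ⟨0, by omega⟩) h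
    simpa [hones] using this
  have hones_expand : ones = ∑ k, (∑ l, b k l) • (b k : EuclideanSpace ℝ (Fin n)) := by
    have h := b.sum_repr' ones
    rw [← h]
    apply Finset.sum_congr rfl
    intro k _
    congr 1
    rw [euclid_inner]
    simp [hones]
  have hinner_sum : ∀ α γ : Fin n → ℝ,
      ⟪∑ k, α k • (b k : EuclideanSpace ℝ (Fin n)), ∑ k, γ k • (b k : _)⟫
        = ∑ k, α k * γ k := by
    intro α γ
    have := b.orthonormal.inner_sum α γ Finset.univ
    simpa using this
  have hmem_inner : ∀ C i, ⟪ones, r C i⟫ = 0 := by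
    intro C i
    rw [hones_expand, hr, hinner_sum]
    apply Finset.sum_eq_zero
    intro k _
    rcases hdich k with ⟨h0, _⟩ | ⟨hneg, _⟩
    · rw [h0]; ring
    · have hfc0 : fC C (μ k) = 0 := by
        rw [hfC]
        have : μ k < 0 := by rw [hneg]; norm_num
        simp [this]
      rw [hfc0]; ring
  set W := (ℝ ∙ ones)ᗮ with hW
  have hrmem : ∀ C i, r C i ∈ W :=
    fun C i => (Submodule.mem_orthogonal_singleton_iff_inner_right).mpr (hmem_inner C i)
  have hfr : Module.finrank ℝ W = n - 1 := by
    have h1 := Submodule.finrank_add_finrank_orthogonal (K := ℝ ∙ ones) (𝕜 := ℝ)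
    have h2 : Module.finrank ℝ (ℝ ∙ ones) = 1 := finrank_span_singleton honesne
    rw [h2, finrank_euclideanSpace_fin] at h1
    rw [hW]
    omega
  set β : OrthonormalBasis (Fin (n-1)) ℝ W :=
    (stdOrthonormalBasis ℝ W).reindex (finCongr hfr) with hβ
  refine ⟨fun C i => β.repr ⟨r C i, hrmem C i⟩, ?_, ?_⟩
  · -- continuity
    apply Continuous.continuousOn
    apply continuous_pi
    intro i
    apply Continuous.comp β.repr.continuous
    apply Continuous.subtype_mk
    apply continuous_finset_sum
    intro k _
    apply Continuous.fun_smul ?_ continuous_const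
    apply Continuous.mul ?_ continuous_const
    rw [hfC]
    by_cases hv : μ k < 0
    · simp only [hv, if_true]
      exact continuous_const
    · simp only [hv, if_false]
      apply Real.continuous_sqrt.comp
      fun_prop
  · -- distance identity
    intro C hC i j hij
    have hnormeq : ‖β.repr ⟨r C i, hrmem C i⟩ - β.repr ⟨r C j, hrmem C j⟩‖
        = ‖r C i - r C j‖ := by
      rw [← map_sub, β.repr.norm_map]
      rfl
    rw [hnormeq]
    have hdiff : r C i - r C j =
        ∑ k, (fC C (μ k) * (b k i - b k j)) • (b k : EuclideanSpace ℝ (Fin n)) := by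
      rw [hr, ← Finset.sum_sub_distrib]
      apply Finset.sum_congr rfl
      intro k _
      rw [← sub_smul]
      congr 1
      ring
    have hnsq : ‖r C i - r C j‖ ^ 2 =
        ∑ k, (fC C (μ k) * (b k i - b k j)) ^ 2 := by
      rw [hdiff, ← real_inner_self_eq_norm_sq, hinner_sum]
      exact Finset.sum_congr rfl fun k _ => (sq _).symm
    rw [hnsq]
    have hterm : ∀ k, (fC C (μ k) * (b k i - b k j)) ^ 2 =
        ((1 - C) * μ k + C / 2) * (b k i - b k j) ^ 2 := by
      intro k
      rcases hdich k with ⟨_, hpos⟩ | ⟨_, hconst⟩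
      · have hfc2 : (fC C (μ k)) ^ 2 = (1 - C) * μ k + C / 2 := by
          rw [hfC]
          simp only [not_lt.mpr hpos, if_false]
          rw [Real.sq_sqrt]
          have h1 := hC.1
          have h2 := hC.2
          have : 0 ≤ (1 - C) * μ k := mul_nonneg (by linarith) hpos
          linarith
        rw [mul_pow, hfc2]
      · rw [hconst i j, sub_self]
        ring
    rw [Finset.sum_congr rfl (fun k (_ : k ∈ univ) => hterm k)]
    have hA : ∑ k, (b k i - b k j) ^ 2 = 2 := by
      rw [Finset.sum_congr rfl (fun k (_ : k ∈ univ) =>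
        show (b k i - b k j)^2 = b k i * b k i - b k i * b k j -
          (b k j * b k i - b k j * b k j) by ring)]
      rw [Finset.sum_sub_distrib, Finset.sum_sub_distrib, Finset.sum_sub_distrib,
        hrow i i, hrow i j, hrow j i, hrow j j]
      rw [if_pos rfl, if_pos rfl, if_neg hij, if_neg (Ne.symm hij)]
      norm_num
    have hB : ∑ k, μ k * (b k i - b k j) ^ 2 = ‖X i - X j‖ ^ 2 := by
      have h1 : ∀ k, μ k * (b k i - b k j) = ∑ m, (T i m - T j m) * b k m := by
        intro k
        rw [mul_sub, ← hmu k i, ← hmu k j, ← Finset.sum_sub_distrib]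
        apply Finset.sum_congr rfl
        intro m _
        ring
      have h2 : ∑ k, μ k * (b k i - b k j) ^ 2 =
          ∑ k, ∑ m, (b k i - b k j) * ((T i m - T j m) * b k m) := by
        apply Finset.sum_congr rfl
        intro k _
        rw [show μ k * (b k i - b k j)^2 =
          (b k i - b k j) * (μ k * (b k i - b k j)) by ring]
        rw [h1 k, Finset.mul_sum]
      rw [h2, Finset.sum_comm]
      have h3 : ∀ m, ∑ k, (b k i - b k j) * ((T i m - T j m) * b k m) =
          (T i m - T j m) * ((if i = m then (1:ℝ) else 0) - (if j = m then 1 else 0)) := by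
        intro m
        rw [Finset.sum_congr rfl (fun k (_ : k ∈ univ) =>
          show (b k i - b k j) * ((T i m - T j m) * b k m) =
            (T i m - T j m) * (b k i * b k m) - (T i m - T j m) * (b k j * b k m) by ring)]
        rw [Finset.sum_sub_distrib, ← Finset.mul_sum, ← Finset.mul_sum, hrow i m, hrow j m]
        ring
      rw [Finset.sum_congr rfl (fun m (_ : m ∈ univ) => h3 m)]
      have h4 : ∑ m, (T i m - T j m) *
          ((if i = m then (1:ℝ) else 0) - (if j = m then 1 else 0)) =
          (T i i - T j i) - (T i j - T j j) := by
        rw [Finset.sum_congr rfl (fun m (_ : m ∈ univ) =>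
          show (T i m - T j m) * ((if i = m then (1:ℝ) else 0) - (if j = m then 1 else 0))
            = (if i = m then T i m - T j m else 0) - (if j = m then T i m - T j m else 0)
            by by_cases h5 : i = m <;> by_cases h6 : j = m <;> simp [h5, h6])]
        rw [Finset.sum_sub_distrib]
        rw [Finset.sum_ite_eq univ i (fun m => T i m - T j m),
          Finset.sum_ite_eq univ j (fun m => T i m - T j m)]
        simp
      rw [h4]
      rw [hTdef, hTdef, hTdef, hTdef, hGdist i j, hGsym j i]
      ring
    rw [Finset.sum_congr rfl (fun k (_ : k ∈ univ) =>
      show ((1 - C) * μ k + C / 2) * (b k i - b k j) ^ 2 =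
        (1 - C) * (μ k * (b k i - b k j) ^ 2) + (C / 2) * (b k i - b k j) ^ 2 by ring)]
    rw [Finset.sum_add_distrib, ← Finset.mul_sum, ← Finset.mul_sum, hA, hB]
    ring

end Construction

/-- Corollary `g_exists`: there is a continuous path `g` on `[0,1]` of
datasets interpolating the squared distances of `X` with those of a unit simplex, along
which the set of stationary t-SNE outputs is constant (for `C < 1`). -/
theorem g_exists (n d : ℕ) (hn : 2 < n) (hd : 1 ≤ d)
    (X : Fin n → EuclideanSpace ℝ (Fin (n - 1))) :
    ∃ g : ℝ → (Fin n → EuclideanSpace ℝ (Fin (n - 1))),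
      ContinuousOn g (Set.Icc 0 1) ∧
      (∀ C ∈ Set.Icc (0 : ℝ) 1, ∀ i j : Fin n, i ≠ j →
        ‖g C i - g C j‖ ^ 2 = (1 - C) * ‖X i - X j‖ ^ 2 + C) ∧
      (∀ ρ : ℝ, 1 < ρ → ρ < (n : ℝ) - 1 →
        ∀ C ∈ Set.Ico (0 : ℝ) 1, TSNE d ρ X = TSNE d ρ (g C)) := by
  obtain ⟨g, hgcont, hgdist⟩ := g_construction hn X
  refine ⟨g, hgcont, hgdist, ?_⟩
  intro ρ hρ1 hρ2 C hC
  have hC' : C ∈ Set.Icc (0:ℝ) 1 := ⟨hC.1, hC.2.le⟩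
  exact TSNE_transfer hn hC.1 hC.2 (fun i j hij => hgdist C hC' i j hij) hρ1 hρ2

end TSNEPaper
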